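/- The radical of the Shapovalov form on the Verma module V(h,c), i.e. the set {x ∈ V(h,c) : ⟨x, y⟩ = 0 for all y ∈ V(h,c)}, is exactly the maximal proper submodule of V(h,c). -/

import Mathlib

/-- A representation of the Virasoro algebra on a complex vector space `V`:
a family of operators `L n` (`n : ℤ`) and an operator `C` satisfying the Virasoro
commutation relations
`[L m, L n] = (n - m) L (m+n) + (C/12)(n³ - n) δ_{m+n,0}` and `[C, L n] = 0`. -/
structure VirasoroRep (V : Type) [AddCommGroup V] [Module ℂ V] where
  L : ℤ → Module.End ℂ V
  C : Module.End ℂ V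
  comm_LL : ∀ m n : ℤ, L m * L n - L n * L m =
      ((n : ℂ) - (m : ℂ)) • L (m + n) +
        (if m + n = 0 then (((n : ℂ) ^ 3 - (n : ℂ)) / 12) else 0) • C
  comm_CL : ∀ n : ℤ, C * L n - L n * C = 0

namespace VirasoroRep

variable {V W : Type} [AddCommGroup V] [Module ℂ V] [AddCommGroup W] [Module ℂ W]

/-- `v` is a singular vector of weight `(h, c)`: it is annihilated by all `L (-n)`, `n ≥ 1`,
and is an eigenvector of `L 0` and `C` with eigenvalues `h` resp. `c`. -/
def IsSingular (ρ : VirasoroRep V) (h c : ℂ) (v : V) : Prop :=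
  (∀ n : ℤ, 1 ≤ n → ρ.L (-n) v = 0) ∧ ρ.L 0 v = h • v ∧ ρ.C v = c • v

/-- A linear subspace invariant under the Virasoro action, i.e. an `𝔏`-submodule. -/
def Invariant (ρ : VirasoroRep V) (p : Submodule ℂ V) : Prop :=
  (∀ n : ℤ, ∀ x ∈ p, ρ.L n x ∈ p) ∧ ∀ x ∈ p, ρ.C x ∈ p

/-- The `𝔏`-submodule `U(𝔏)·v` generated by a vector `v`: the smallest invariant subspace
containing `v`. -/
def gen (ρ : VirasoroRep V) (v : V) : Submodule ℂ V :=
  sInf {p : Submodule ℂ V | ρ.Invariant p ∧ v ∈ p}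

/-- The vector `v` generates the module: `U(𝔏)·v` is everything. -/
def Generates (ρ : VirasoroRep V) (v : V) : Prop :=
  ∀ p : Submodule ℂ V, ρ.Invariant p → v ∈ p → p = ⊤

/-- A homomorphism of Virasoro modules: a linear map intertwining the actions. -/
def IsHom (ρ : VirasoroRep V) (σ : VirasoroRep W) (f : V →ₗ[ℂ] W) : Prop :=
  (∀ (n : ℤ) (x : V), f (ρ.L n x) = σ.L n (f x)) ∧ ∀ x : V, f (ρ.C x) = σ.C (f x)

end VirasoroRep

/-- A bundled module of the Virasoro algebra (a complex vector space together with a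
Virasoro representation on it). -/
structure VirasoroModule where
  carrier : Type
  [isAddCommGroup : AddCommGroup carrier]
  [isModule : Module ℂ carrier]
  rep : VirasoroRep carrier

attribute [instance] VirasoroModule.isAddCommGroup VirasoroModule.isModule

/-- `M` together with the singular vector `v` is a Verma module of weight `(h, c)`:
`v` is singular of weight `(h, c)`, generates `M`, and the pair has the universal property
that any singular vector of weight `(h, c)` in any Virasoro module receives a unique
homomorphism from `M` sending `v` to it. -/
def IsVermaModule (h c : ℂ) (M : VirasoroModule) (v : M.carrier) : Prop :=
  M.rep.IsSingular h c v ∧ M.rep.Generates v ∧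
    ∀ (W : VirasoroModule) (w : W.carrier), W.rep.IsSingular h c w →
      ∃! f : M.carrier →ₗ[ℂ] W.carrier, M.rep.IsHom W.rep f ∧ f v = w

namespace ShapAux

open VirasoroRep

variable {V : Type} [AddCommGroup V] [Module ℂ V]

lemma comm_apply (ρ : VirasoroRep V) (m n : ℤ) (x : V) :
    ρ.L m (ρ.L n x) - ρ.L n (ρ.L m x) =
      ((n : ℂ) - (m : ℂ)) • ρ.L (m + n) x +
        (if m + n = 0 then (((n : ℂ) ^ 3 - (n : ℂ)) / 12) else 0) • ρ.C x := by
  have h2 := LinearMap.ext_iff.mp (ρ.comm_LL m n) x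
  simp only [LinearMap.sub_apply, LinearMap.add_apply, LinearMap.smul_apply,
    Module.End.mul_apply] at h2
  exact h2

lemma comm_apply' (ρ : VirasoroRep V) (m n : ℤ) (x : V) :
    ρ.L m (ρ.L n x) = ρ.L n (ρ.L m x) +
      (((n : ℂ) - (m : ℂ)) • ρ.L (m + n) x +
        (if m + n = 0 then (((n : ℂ) ^ 3 - (n : ℂ)) / 12) else 0) • ρ.C x) :=
  sub_eq_iff_eq_add'.mp (comm_apply ρ m n x)

lemma CL_apply (ρ : VirasoroRep V) (n : ℤ) (x : V) :
    ρ.C (ρ.L n x) = ρ.L n (ρ.C x) := by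
  have h2 := LinearMap.ext_iff.mp (ρ.comm_CL n) x
  simp only [LinearMap.sub_apply, Module.End.mul_apply, LinearMap.zero_apply] at h2
  exact sub_eq_zero.mp h2

/-- `C` expressed through the `L`'s. -/
lemma Cexp (ρ : VirasoroRep V) (x : V) :
    ρ.C x = (2 : ℂ) • (ρ.L (-2) (ρ.L 2 x) - ρ.L 2 (ρ.L (-2) x)) - (8 : ℂ) • ρ.L 0 x := by
  have h2 := comm_apply ρ (-2) 2 x
  rw [show ((-2 : ℤ) + 2) = 0 from by ring, if_pos rfl] at h2
  rw [h2]
  push_cast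
  module

def word (ρ : VirasoroRep V) (v : V) : List ℤ → V
  | [] => v
  | n :: l => ρ.L n (word ρ v l)

def posWords (ρ : VirasoroRep V) (v : V) : Set V :=
  {w | ∃ l : List ℤ, (∀ n ∈ l, 1 ≤ n) ∧ word ρ v l = w}

variable (ρ : VirasoroRep V) (h c : ℂ) (v : V)

lemma v_mem_span : v ∈ Submodule.span ℂ (posWords ρ v) :=
  Submodule.subset_span ⟨[], by simp [word]⟩

lemma Lpos_mem {n : ℤ} (hn : 1 ≤ n) {x : V}
    (hx : x ∈ Submodule.span ℂ (posWords ρ v)) :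
    ρ.L n x ∈ Submodule.span ℂ (posWords ρ v) := by
  have hle : Submodule.span ℂ (posWords ρ v) ≤
      Submodule.comap (ρ.L n) (Submodule.span ℂ (posWords ρ v)) := by
    rw [Submodule.span_le]
    rintro w ⟨l, hl, rfl⟩
    refine Submodule.mem_comap.mpr (Submodule.subset_span ⟨n :: l, ?_, rfl⟩)
    intro m hm
    rcases List.mem_cons.mp hm with rfl | hm'
    · exact hn
    · exact hl m hm'
  exact hle hx

lemma C_word (hCv : ρ.C v = c • v) :
    ∀ l : List ℤ, ρ.C (word ρ v l) = c • word ρ v l := by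
  intro l
  induction l with
  | nil => exact hCv
  | cons n l ih => simp [word, CL_apply, ih, map_smul]

lemma Lany_mem (hs : ρ.IsSingular h c v) :
    ∀ (l : List ℤ), (∀ n ∈ l, 1 ≤ n) → ∀ m : ℤ,
      ρ.L m (word ρ v l) ∈ Submodule.span ℂ (posWords ρ v) := by
  intro l
  induction l with
  | nil =>
    intro _ m
    rcases lt_trichotomy m 0 with hm | hm | hm
    · have hz : ρ.L m v = 0 := by
        have := hs.1 (-m) (by omega)
        simpa using this
      simp only [word, hz]
      exact Submodule.zero_mem _
    · subst hm
      simp only [word, hs.2.1]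
      exact Submodule.smul_mem _ _ (v_mem_span ρ v)
    · refine Submodule.subset_span ⟨[m], ?_, rfl⟩
      intro k hk
      simp at hk
      omega
  | cons n l ih =>
    intro hl m
    have hn : 1 ≤ n := hl n List.mem_cons_self
    have hl' : ∀ k ∈ l, 1 ≤ k := fun k hk => hl k (List.mem_cons_of_mem _ hk)
    show ρ.L m (ρ.L n (word ρ v l)) ∈ _
    rw [comm_apply' ρ m n (word ρ v l)]
    refine Submodule.add_mem _ ?_ (Submodule.add_mem _ ?_ ?_)
    · exact Lpos_mem ρ v hn (ih hl' m)
    · exact Submodule.smul_mem _ _ (ih hl' (m + n))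
    · rw [C_word ρ c v hs.2.2]
      exact Submodule.smul_mem _ _ (Submodule.smul_mem _ _
        (Submodule.subset_span ⟨l, hl', rfl⟩))

lemma span_eq_top (hs : ρ.IsSingular h c v) (hg : ρ.Generates v) :
    Submodule.span ℂ (posWords ρ v) = ⊤ := by
  apply hg
  · constructor
    · intro n x hx
      have hle : Submodule.span ℂ (posWords ρ v) ≤
          Submodule.comap (ρ.L n) (Submodule.span ℂ (posWords ρ v)) := by
        rw [Submodule.span_le]
        rintro w ⟨l, hl, rfl⟩
        exact Submodule.mem_comap.mpr (Lany_mem ρ h c v hs l hl n)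
      exact hle hx
    · intro x hx
      have hle : Submodule.span ℂ (posWords ρ v) ≤
          Submodule.comap ρ.C (Submodule.span ℂ (posWords ρ v)) := by
        rw [Submodule.span_le]
        rintro w ⟨l, hl, rfl⟩
        refine Submodule.mem_comap.mpr ?_
        rw [C_word ρ c v hs.2.2]
        exact Submodule.smul_mem _ _ (Submodule.subset_span ⟨l, hl, rfl⟩)
      exact hle hx
  · exact v_mem_span ρ v

lemma pos_sum_nonneg : ∀ l : List ℤ, (∀ n ∈ l, 1 ≤ n) → 0 ≤ l.sum := by
  intro l
  induction l with
  | nil => simp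
  | cons n l ih =>
    intro hl
    have h1 : 1 ≤ n := hl n List.mem_cons_self
    have h2 := ih (fun k hk => hl k (List.mem_cons_of_mem _ hk))
    simp only [List.sum_cons]
    omega

lemma L0_word (hs : ρ.IsSingular h c v) :
    ∀ l : List ℤ, (∀ n ∈ l, 1 ≤ n) →
      ρ.L 0 (word ρ v l) = (h + (l.sum : ℂ)) • word ρ v l := by
  intro l
  induction l with
  | nil =>
    intro _
    simp only [word, List.sum_nil, Int.cast_zero, add_zero]
    exact hs.2.1
  | cons n l ih =>
    intro hl
    have hn : 1 ≤ n := hl n List.mem_cons_self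
    have hl' : ∀ k ∈ l, 1 ≤ k := fun k hk => hl k (List.mem_cons_of_mem _ hk)
    simp only [word]
    rw [comm_apply' ρ 0 n (word ρ v l), if_neg (show ¬((0 : ℤ) + n = 0) by omega),
      ih hl', zero_add, map_smul, zero_smul, add_zero]
    have hcast : (((n :: l).sum : ℤ) : ℂ) = (n : ℂ) + ((l.sum : ℤ) : ℂ) := by
      push_cast [List.sum_cons]
      ring
    rw [hcast, Int.cast_zero, sub_zero]
    module

noncomputable def P (ρ : VirasoroRep V) (h : ℂ) : ℕ → Module.End ℂ V
  | 0 => 1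
  | (N + 1) => (ρ.L 0 - (h + ((N : ℂ) + 1)) • (1 : Module.End ℂ V)) * P ρ h N

noncomputable def cc : ℕ → ℂ := fun N => ∏ d ∈ Finset.range N, (-((d : ℂ) + 1))

lemma cc_ne_zero (N : ℕ) : cc N ≠ 0 := by
  rw [cc]
  apply Finset.prod_ne_zero_iff.mpr
  intro d _
  rw [neg_ne_zero]
  exact Nat.cast_add_one_ne_zero d

lemma P_eig {μ : ℂ} {x : V} (hx : ρ.L 0 x = μ • x) (N : ℕ) :
    P ρ h N x = (∏ d ∈ Finset.range N, (μ - (h + ((d : ℂ) + 1)))) • x := by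
  induction N with
  | zero => simp [P]
  | succ N ih =>
    rw [P, Module.End.mul_apply, ih, Finset.prod_range_succ]
    simp only [map_smul, LinearMap.sub_apply, LinearMap.smul_apply,
      Module.End.one_apply, hx]
    module

lemma P_mem (p : Submodule ℂ V) (hp : ∀ x ∈ p, ρ.L 0 x ∈ p) {x : V} (hx : x ∈ p) :
    ∀ N, P ρ h N x ∈ p := by
  intro N
  induction N with
  | zero => simpa [P] using hx
  | succ N ih =>
    rw [P, Module.End.mul_apply]
    simp only [LinearMap.sub_apply, LinearMap.smul_apply, Module.End.one_apply]
    exact Submodule.sub_mem _ (hp _ ih) (Submodule.smul_mem _ _ ih)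

variable (B : V →ₗ[ℂ] V →ₗ[ℂ] ℂ)

lemma exists_P (hs : ρ.IsSingular h c v) (hg : ρ.Generates v) (hBv : B v v = 1)
    (hBcontra : ∀ (n : ℤ) (x y : V), B (ρ.L n x) y = B x (ρ.L (-n) y)) (x : V) :
    ∃ N : ℕ, ∀ N' ≥ N, P ρ h N' x = (cc N' * B x v) • v := by
  have hx : x ∈ Submodule.span ℂ (posWords ρ v) := by
    rw [span_eq_top ρ h c v hs hg]; trivial
  induction hx using Submodule.span_induction with
  | mem w hw =>
    obtain ⟨l, hl, rfl⟩ := hw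
    match l, hl with
    | [], _ =>
      refine ⟨0, fun N' _ => ?_⟩
      rw [P_eig ρ h (x := word ρ v []) (μ := h) (by simpa [word] using hs.2.1)]
      show _ • v = _ • v
      congr 1
      rw [show B (word ρ v []) v = 1 from hBv, mul_one, cc]
      exact Finset.prod_congr rfl (fun d _ => by ring)
    | (n :: l'), hl =>
      have hn : 1 ≤ n := hl n List.mem_cons_self
      have hl' : ∀ k ∈ l', 1 ≤ k := fun k hk => hl k (List.mem_cons_of_mem _ hk)
      set s : ℤ := (n :: l').sum with hsdef
      have hspos : 1 ≤ s := by
        have := pos_sum_nonneg l' hl'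
        simp only [hsdef, List.sum_cons]
        omega
      refine ⟨s.toNat, fun N' hN' => ?_⟩
      have heig := L0_word ρ h c v hs (n :: l') hl
      rw [P_eig ρ h (x := word ρ v (n :: l')) (μ := h + (s : ℂ)) heig]
      have hBz : B (word ρ v (n :: l')) v = 0 := by
        show B (ρ.L n (word ρ v l')) v = 0
        rw [hBcontra n (word ρ v l') v, hs.1 n hn]
        simp
      rw [hBz, mul_zero, zero_smul]
      have hmem : s.toNat - 1 ∈ Finset.range N' := by
        rw [Finset.mem_range]; omega
      rw [Finset.prod_eq_zero hmem, zero_smul]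
      have h1 : ((s.toNat - 1 : ℕ) : ℂ) + 1 = ((s.toNat : ℕ) : ℂ) := by
        have : 1 ≤ s.toNat := by omega
        push_cast [Nat.cast_sub this]
        ring
      have h2 : ((s.toNat : ℕ) : ℂ) = (s : ℂ) := by
        have := Int.toNat_of_nonneg (by omega : (0:ℤ) ≤ s)
        exact_mod_cast congrArg (Int.cast : ℤ → ℂ) this
      rw [h1, h2]
      ring
  | zero =>
    exact ⟨0, fun N' _ => by simp⟩
  | add x y hx hy ihx ihy =>
    obtain ⟨N1, h1⟩ := ihx
    obtain ⟨N2, h2⟩ := ihy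
    refine ⟨max N1 N2, fun N' hN' => ?_⟩
    rw [map_add, h1 N' (le_trans (le_max_left _ _) hN'),
      h2 N' (le_trans (le_max_right _ _) hN'), map_add, LinearMap.add_apply]
    rw [mul_add, add_smul]
  | smul a x hx ihx =>
    obtain ⟨N1, h1⟩ := ihx
    refine ⟨N1, fun N' hN' => ?_⟩
    rw [map_smul, h1 N' hN', map_smul, LinearMap.smul_apply, smul_smul, smul_eq_mul]
    ring_nf

lemma crux (hs : ρ.IsSingular h c v) (hg : ρ.Generates v) (hBv : B v v = 1)
    (hBcontra : ∀ (n : ℤ) (x y : V), B (ρ.L n x) y = B x (ρ.L (-n) y))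
    (p : Submodule ℂ V) (hpinv : ρ.Invariant p) (hptop : p ≠ ⊤) :
    ∀ x ∈ p, B x v = 0 := by
  intro x hx
  by_contra hB
  obtain ⟨N, hN⟩ := exists_P ρ h c v B hs hg hBv hBcontra x
  have h1 : P ρ h N x ∈ p := P_mem ρ h p (fun y hy => hpinv.1 0 y hy) hx N
  rw [hN N le_rfl] at h1
  have hcc := cc_ne_zero N
  have hvp : v ∈ p := by
    have h2 := p.smul_mem (cc N * B x v)⁻¹ h1
    rwa [smul_smul, inv_mul_cancel₀ (mul_ne_zero hcc hB), one_smul] at h2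
  exact hptop (hg p hpinv hvp)

end ShapAux

namespace ShapAux

variable {V : Type} [AddCommGroup V] [Module ℂ V]

/-- The "perp of `p`" submodule `{y | ∀ w ∈ p, B w y = 0}`. -/
def Qsub (B : V →ₗ[ℂ] V →ₗ[ℂ] ℂ) (p : Submodule ℂ V) : Submodule ℂ V where
  carrier := {y | ∀ w ∈ p, B w y = 0}
  add_mem' := by
    intro a b ha hb w hw
    rw [map_add, ha w hw, hb w hw, add_zero]
  zero_mem' := by
    intro w hw
    simp
  smul_mem' := by
    intro a y hy w hw
    rw [map_smul, smul_eq_mul, hy w hw, mul_zero]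

lemma mem_Qsub {B : V →ₗ[ℂ] V →ₗ[ℂ] ℂ} {p : Submodule ℂ V} {y : V} :
    y ∈ Qsub B p ↔ ∀ w ∈ p, B w y = 0 := Iff.rfl

end ShapAux

/-- The radical of the Shapovalov form on the Verma module `V(h,c)` is exactly the maximal
proper submodule (the sum of all proper invariant submodules). -/
theorem shapovalov_radical_eq_maximal_proper_submodule (h c : ℂ)
    (M : VirasoroModule) (v : M.carrier) (hV : IsVermaModule h c M v)
    (B : M.carrier →ₗ[ℂ] M.carrier →ₗ[ℂ] ℂ) (hBv : B v v = 1)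
    (hBcontra : ∀ (n : ℤ) (x y : M.carrier), B (M.rep.L n x) y = B x (M.rep.L (-n) y)) :
    ∀ x : M.carrier, (∀ y : M.carrier, B x y = 0) ↔
      x ∈ sSup {p : Submodule ℂ M.carrier | M.rep.Invariant p ∧ p ≠ ⊤} := by
  obtain ⟨hs, hg, -⟩ := hV
  set ρ := M.rep with hρ
  intro x
  constructor
  · -- radical ⊆ maximal proper submodule
    intro hx
    -- the radical, i.e. the kernel of B, is an invariant proper submodule
    have hker : ∀ z : M.carrier, (∀ y, B z y = 0) → ∀ (a b : ℤ) (y : M.carrier),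
        B (ρ.L a (ρ.L b z)) y = 0 := by
      intro z hz a b y
      rw [hBcontra a, hBcontra b, hz]
    have hRinv : ρ.Invariant (LinearMap.ker B) := by
      constructor
      · intro n z hz
        rw [LinearMap.mem_ker] at hz ⊢
        ext y
        rw [LinearMap.zero_apply, hBcontra n z y]
        rw [hz]
        rfl
      · intro z hz
        rw [LinearMap.mem_ker] at hz ⊢
        have hz' : ∀ y, B z y = 0 := fun y => by rw [hz]; rfl
        ext y
        rw [LinearMap.zero_apply, ShapAux.Cexp ρ z]
        simp only [map_sub, map_smul, LinearMap.sub_apply, LinearMap.smul_apply,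
          smul_eq_mul]
        rw [hker z hz' (-2) 2 y, hker z hz' 2 (-2) y, hBcontra 0 z y, hz']
        ring
    have hRtop : LinearMap.ker B ≠ ⊤ := by
      intro htop
      have hvk : v ∈ LinearMap.ker B := htop ▸ Submodule.mem_top
      rw [LinearMap.mem_ker] at hvk
      have : B v v = 0 := by rw [hvk]; rfl
      rw [hBv] at this
      exact one_ne_zero this
    have hxk : x ∈ LinearMap.ker B := LinearMap.mem_ker.mpr (LinearMap.ext hx)
    have hles : LinearMap.ker B ≤
        sSup {p : Submodule ℂ M.carrier | ρ.Invariant p ∧ p ≠ ⊤} :=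
      le_sSup (Set.mem_setOf.mpr ⟨hRinv, hRtop⟩)
    exact hles hxk
  · -- maximal proper submodule ⊆ radical
    intro hx y
    have hle : sSup {p : Submodule ℂ M.carrier | ρ.Invariant p ∧ p ≠ ⊤} ≤
        LinearMap.ker B := by
      apply sSup_le
      rintro p ⟨hpinv, hptop⟩
      intro z hz
      -- the perp Qsub B p is invariant and contains v, hence is everything
      have hQinv : ρ.Invariant (ShapAux.Qsub B p) := by
        constructor
        · intro n y' hy'
          rw [ShapAux.mem_Qsub] at hy' ⊢
          intro w hw
          have := hBcontra (-n) w y'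
          rw [neg_neg] at this
          rw [← this]
          exact hy' _ (hpinv.1 (-n) w hw)
        · intro y' hy'
          rw [ShapAux.mem_Qsub] at hy' ⊢
          intro w hw
          have key : ∀ a b : ℤ, B w (ρ.L a (ρ.L b y')) = 0 := by
            intro a b
            have h1 := hBcontra (-a) w (ρ.L b y')
            rw [neg_neg] at h1
            have h2 := hBcontra (-b) (ρ.L (-a) w) y'
            rw [neg_neg] at h2
            rw [← h1, ← h2]
            exact hy' _ (hpinv.1 (-b) _ (hpinv.1 (-a) w hw))
          have h0 : B w (ρ.L 0 y') = 0 := by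
            have h1 := hBcontra 0 w y'
            rw [neg_zero] at h1
            rw [← h1]
            exact hy' _ (hpinv.1 0 w hw)
          rw [ShapAux.Cexp ρ y']
          simp only [map_sub, map_smul, smul_eq_mul]
          rw [key (-2) 2, key 2 (-2), h0]
          ring
      have hvQ : v ∈ ShapAux.Qsub B p := by
        rw [ShapAux.mem_Qsub]
        exact ShapAux.crux ρ h c v B hs hg hBv hBcontra p hpinv hptop
      have hQtop : ShapAux.Qsub B p = ⊤ := hg _ hQinv hvQ
      rw [LinearMap.mem_ker]
      ext y'
      rw [LinearMap.zero_apply]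
      have hy' : y' ∈ ShapAux.Qsub B p := hQtop ▸ Submodule.mem_top
      exact (ShapAux.mem_Qsub.mp hy') z hz
    have := hle hx
    rw [LinearMap.mem_ker] at this
    rw [this]
    rfl
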